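/- arXiv:1604.07735 — 2 statements merged into one kernel-verified Lean document; each statement's English description precedes it below -/
import Mathlib

section
/- Let C₀, C₁, ⟨φ₀⟩, ⟨φ₁⟩ be positive constants with C₀·C₁·⟨φ₀⟩·⟨φ₁⟩ < 1. Suppose ε₀, ε₁ ∈ L^∞(ℝ^d) satisfy ε₀ = C₀(exp(−(φ₀ ∗ ε₁)) − 1) and ε₁ = C₁(exp(−(φ₁ ∗ ε₀)) − 1) pointwise, where φ₀, φ₁ : ℝ^d → [0,∞) are integrable with ∫φ_i = ⟨φ_i⟩. Then if ‖ε₀‖_∞ and ‖ε₁‖_∞ are smaller than a suitable δ > 0 (depending on the constants), necessarily ε₀ = 0 and ε₁ = 0 almost everywhere. -/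
open MeasureTheory

private lemma abs_exp_sub_one_le_aux (t : ℝ) :
    |Real.exp t - 1| ≤ |t| * Real.exp |t| := by
  rcases le_or_gt 0 t with ht | ht
  · rw [abs_of_nonneg ht, abs_of_nonneg (by simpa using Real.one_le_exp ht)]
    have h1 : 1 - t ≤ Real.exp (-t) := by nlinarith [Real.add_one_le_exp (-t)]
    have h2 : Real.exp t * (1 - t) ≤ Real.exp t * Real.exp (-t) :=
      mul_le_mul_of_nonneg_left h1 (Real.exp_pos t).le
    rw [← Real.exp_add] at h2
    simp only [add_neg_cancel, Real.exp_zero] at h2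
    nlinarith
  · rw [abs_of_neg ht, abs_of_nonpos (by simpa using Real.exp_le_one_iff.2 ht.le)]
    have h1 : 1 + t ≤ Real.exp t := by nlinarith [Real.add_one_le_exp t]
    have h2 : (1:ℝ) ≤ Real.exp (-t) := Real.one_le_exp (by linarith)
    nlinarith

private lemma conv_bound {d : ℕ} (φ : EuclideanSpace ℝ (Fin d) → ℝ)
    (hφint : Integrable φ) (hφpos : ∀ x, 0 ≤ φ x) {c : ℝ} (hφnorm : ∫ x, φ x = c)
    (ε : EuclideanSpace ℝ (Fin d) → ℝ) (hε : Measurable ε) {N : ℝ}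
    (hN : ∀ᵐ y, |ε y| ≤ N) (x : EuclideanSpace ℝ (Fin d)) :
    |∫ y, φ (x - y) * ε y| ≤ c * N := by
  have hg : Integrable (fun y => φ (x - y)) := hφint.comp_sub_left x
  have hprod : Integrable (fun y => φ (x - y) * ε y) := by
    have := hg.bdd_mul (c := N) hε.aestronglyMeasurable
      (hN.mono fun y hy => by simpa using hy)
    exact this.congr (Filter.Eventually.of_forall fun y => mul_comm _ _)
  calc |∫ y, φ (x - y) * ε y| ≤ ∫ y, |φ (x - y)| * |ε y| := by
        simpa [abs_mul] using norm_integral_le_integral_norm (fun y => φ (x - y) * ε y)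
    _ ≤ ∫ y, φ (x - y) * N := by
        refine integral_mono_ae
          (hprod.abs.congr (Filter.Eventually.of_forall fun y => (abs_mul _ _)))
          (hg.mul_const N) ?_
        filter_upwards [hN] with y hy
        rw [abs_of_nonneg (hφpos _)]
        exact mul_le_mul_of_nonneg_left hy (hφpos _)
    _ = (∫ y, φ (x - y)) * N := integral_mul_const N _
    _ = c * N := by rw [integral_sub_left_eq_self φ volume x, hφnorm]

theorem stationary_perturbation_trivial {d : ℕ}
    (C₀ C₁ c₀ c₁ : ℝ) (hC₀ : 0 < C₀) (hC₁ : 0 < C₁) (hc₀ : 0 < c₀) (hc₁ : 0 < c₁)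
    (hsmall : C₀ * C₁ * c₀ * c₁ < 1)
    (φ₀ φ₁ : EuclideanSpace ℝ (Fin d) → ℝ)
    (hφ₀int : Integrable φ₀) (hφ₁int : Integrable φ₁)
    (hφ₀pos : ∀ x, 0 ≤ φ₀ x) (hφ₁pos : ∀ x, 0 ≤ φ₁ x)
    (hφ₀norm : ∫ x, φ₀ x = c₀) (hφ₁norm : ∫ x, φ₁ x = c₁) :
    ∃ δ : ℝ, 0 < δ ∧
      ∀ ε₀ ε₁ : EuclideanSpace ℝ (Fin d) → ℝ,
        Measurable ε₀ → Measurable ε₁ →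
        eLpNorm ε₀ ⊤ volume < ENNReal.ofReal δ →
        eLpNorm ε₁ ⊤ volume < ENNReal.ofReal δ →
        (∀ x, ε₀ x = C₀ * (Real.exp (-(∫ y, φ₀ (x - y) * ε₁ y)) - 1)) →
        (∀ x, ε₁ x = C₁ * (Real.exp (-(∫ y, φ₁ (x - y) * ε₀ y)) - 1)) →
        (∀ᵐ x, ε₀ x = 0) ∧ (∀ᵐ x, ε₁ x = 0) := by
  set K := C₀ * C₁ * c₀ * c₁ with hK
  have hK0 : 0 < K := by positivity
  have hlogK : Real.log K < 0 := Real.log_neg hK0 hsmall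
  refine ⟨-Real.log K / (2 * (c₀ + c₁)), div_pos (by linarith) (by positivity), ?_⟩
  set δ := -Real.log K / (2 * (c₀ + c₁)) with hδ
  have hδpos : 0 < δ := div_pos (by linarith) (by positivity)
  have hq : K * (Real.exp (c₀ * δ) * Real.exp (c₁ * δ)) < 1 := by
    rw [← Real.exp_add, ← Real.exp_log hK0, ← Real.exp_add]
    have : c₀ * δ + c₁ * δ = -Real.log K / 2 := by
      rw [hδ]; field_simp; ring
    rw [this]
    calc Real.exp (Real.log K + -Real.log K / 2) = Real.exp (Real.log K / 2) := by ring_nf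
      _ < Real.exp 0 := Real.exp_lt_exp.2 (by linarith)
      _ = 1 := Real.exp_zero
  intro ε₀ ε₁ hm₀ hm₁ hsn₀ hsn₁ heq₀ heq₁
  set N₀ := (eLpNorm ε₀ ⊤ volume).toReal with hN₀def
  set N₁ := (eLpNorm ε₁ ⊤ volume).toReal with hN₁def
  have hfin₀ : eLpNorm ε₀ ⊤ volume ≠ ⊤ := (hsn₀.trans ENNReal.ofReal_lt_top).ne
  have hfin₁ : eLpNorm ε₁ ⊤ volume ≠ ⊤ := (hsn₁.trans ENNReal.ofReal_lt_top).ne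
  have hN₀δ : N₀ < δ := ENNReal.toReal_lt_of_lt_ofReal hsn₀
  have hN₁δ : N₁ < δ := ENNReal.toReal_lt_of_lt_ofReal hsn₁
  have hN₀nn : 0 ≤ N₀ := ENNReal.toReal_nonneg
  have hN₁nn : 0 ≤ N₁ := ENNReal.toReal_nonneg
  have hae : ∀ (ε : EuclideanSpace ℝ (Fin d) → ℝ), eLpNorm ε ⊤ volume ≠ ⊤ →
      ∀ᵐ y, |ε y| ≤ (eLpNorm ε ⊤ volume).toReal := by
    intro ε hfin
    have hfin' : eLpNormEssSup ε volume ≠ ⊤ := by rwa [eLpNorm_exponent_top] at hfin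
    filter_upwards [ae_le_eLpNormEssSup (f := ε) (μ := volume)] with y hy
    have h2 : ((‖ε y‖₊ : ENNReal)).toReal ≤ (eLpNormEssSup ε volume).toReal :=
      ENNReal.toReal_mono hfin' hy
    simpa [eLpNorm_exponent_top, Real.norm_eq_abs] using h2
  have hae₀ : ∀ᵐ y, |ε₀ y| ≤ N₀ := hae ε₀ hfin₀
  have hae₁ : ∀ᵐ y, |ε₁ y| ≤ N₁ := hae ε₁ hfin₁
  -- pointwise bounds
  have key : ∀ (C cc : ℝ) (hC : 0 < C) (hcc : 0 < cc)
      (φ : EuclideanSpace ℝ (Fin d) → ℝ) (hφint : Integrable φ)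
      (hφpos : ∀ x, 0 ≤ φ x) (hφnorm : ∫ x, φ x = cc)
      (ε η : EuclideanSpace ℝ (Fin d) → ℝ) (hη : Measurable η) (N : ℝ) (hNnn : 0 ≤ N)
      (hN : ∀ᵐ y, |η y| ≤ N)
      (heq : ∀ x, ε x = C * (Real.exp (-(∫ y, φ (x - y) * η y)) - 1)) (x : _),
      |ε x| ≤ C * cc * Real.exp (cc * N) * N := by
    intro C cc hC hcc φ hφint hφpos hφnorm ε η hη N hNnn hN heq x
    have ha : |∫ y, φ (x - y) * η y| ≤ cc * N := conv_bound φ hφint hφpos hφnorm η hη hN x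
    set a := ∫ y, φ (x - y) * η y with hadef
    calc |ε x| = C * |Real.exp (-a) - 1| := by rw [heq x, abs_mul, abs_of_pos hC]
      _ ≤ C * (|(-a)| * Real.exp |(-a)|) :=
          mul_le_mul_of_nonneg_left (abs_exp_sub_one_le_aux (-a)) hC.le
      _ ≤ C * ((cc * N) * Real.exp (cc * N)) := by
          rw [abs_neg]
          have := Real.exp_le_exp.2 ha
          have h1 : |a| * Real.exp |a| ≤ (cc * N) * Real.exp (cc * N) :=
            mul_le_mul ha this (Real.exp_pos _).le (by positivity)
          exact mul_le_mul_of_nonneg_left h1 hC.le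
      _ = C * cc * Real.exp (cc * N) * N := by ring
  have hb₀ : ∀ x, |ε₀ x| ≤ C₀ * c₀ * Real.exp (c₀ * N₁) * N₁ :=
    key C₀ c₀ hC₀ hc₀ φ₀ hφ₀int hφ₀pos hφ₀norm ε₀ ε₁ hm₁ N₁ hN₁nn hae₁ heq₀
  have hb₁ : ∀ x, |ε₁ x| ≤ C₁ * c₁ * Real.exp (c₁ * N₀) * N₀ :=
    key C₁ c₁ hC₁ hc₁ φ₁ hφ₁int hφ₁pos hφ₁norm ε₁ ε₀ hm₀ N₀ hN₀nn hae₀ heq₁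
  -- from pointwise bound to eLpNorm bound
  have toN : ∀ (ε : EuclideanSpace ℝ (Fin d) → ℝ) (B : ℝ), 0 ≤ B →
      (∀ x, |ε x| ≤ B) → eLpNorm ε ⊤ volume ≠ ⊤ → (eLpNorm ε ⊤ volume).toReal ≤ B := by
    intro ε B hB hεB hfin
    have : eLpNorm ε ⊤ volume ≤ ENNReal.ofReal B := by
      rw [eLpNorm_exponent_top]
      exact eLpNormEssSup_le_of_ae_bound (Filter.Eventually.of_forall fun x => by
        simpa [Real.norm_eq_abs] using hεB x)
    calc (eLpNorm ε ⊤ volume).toReal ≤ (ENNReal.ofReal B).toReal :=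
          ENNReal.toReal_mono ENNReal.ofReal_ne_top this
      _ = B := ENNReal.toReal_ofReal hB
  have hle₀ : N₀ ≤ C₀ * c₀ * Real.exp (c₀ * N₁) * N₁ :=
    toN ε₀ _ (by positivity) hb₀ hfin₀
  have hle₁ : N₁ ≤ C₁ * c₁ * Real.exp (c₁ * N₀) * N₀ :=
    toN ε₁ _ (by positivity) hb₁ hfin₁
  -- contraction
  have hA₀ : N₀ ≤ C₀ * c₀ * Real.exp (c₀ * δ) * N₁ := by
    refine hle₀.trans (mul_le_mul_of_nonneg_right ?_ hN₁nn)
    have h := Real.exp_le_exp.2 (mul_le_mul_of_nonneg_left hN₁δ.le hc₀.le)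
    exact mul_le_mul_of_nonneg_left h (by positivity)
  have hA₁ : N₁ ≤ C₁ * c₁ * Real.exp (c₁ * δ) * N₀ := by
    refine hle₁.trans (mul_le_mul_of_nonneg_right ?_ hN₀nn)
    have h := Real.exp_le_exp.2 (mul_le_mul_of_nonneg_left hN₀δ.le hc₁.le)
    exact mul_le_mul_of_nonneg_left h (by positivity)
  have hN₀zero : N₀ = 0 := by
    have h : N₀ ≤ K * (Real.exp (c₀ * δ) * Real.exp (c₁ * δ)) * N₀ := by
      calc N₀ ≤ C₀ * c₀ * Real.exp (c₀ * δ) * N₁ := hA₀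
        _ ≤ C₀ * c₀ * Real.exp (c₀ * δ) * (C₁ * c₁ * Real.exp (c₁ * δ) * N₀) :=
            mul_le_mul_of_nonneg_left hA₁ (by positivity)
        _ = K * (Real.exp (c₀ * δ) * Real.exp (c₁ * δ)) * N₀ := by rw [hK]; ring
    rcases eq_or_lt_of_le hN₀nn with h0 | h0
    · exact h0.symm
    · have h2 := mul_lt_mul_of_pos_right hq h0
      rw [one_mul] at h2
      linarith
  have hN₁zero : N₁ = 0 := by
    have h := hA₁
    rw [hN₀zero, mul_zero] at h
    linarith
  have hzero : ∀ (ε : EuclideanSpace ℝ (Fin d) → ℝ), Measurable ε →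
      eLpNorm ε ⊤ volume ≠ ⊤ → (eLpNorm ε ⊤ volume).toReal = 0 → ∀ᵐ x, ε x = 0 := by
    intro ε hm hfin h0
    have hz : eLpNorm ε ⊤ volume = 0 := by
      rcases (ENNReal.toReal_eq_zero_iff _).1 h0 with h | h
      · exact h
      · exact absurd h hfin
    have := (eLpNorm_eq_zero_iff hm.aestronglyMeasurable (by simp)).1 hz
    filter_upwards [this] with x hx using hx
  exact ⟨hzero ε₀ hm₀ hfin₀ hN₀zero, hzero ε₁ hm₁ hfin₁ hN₁zero⟩
end

section
/- Let α > 0 and C > 0, and choose T > 0 with exp(3αT) < 1 + 3/(2C). Define F on continuous maps ρ : [0,T] → L^∞(ℝ^d) by F(ρ)_t = e^{−αt}ρ_0 + ∫₀ᵗ e^{−α(t−s)} h(ρ_s) ds where h : L^∞ → L^∞ satisfies ‖h(u) − h(v)‖_∞ ≤ 2α‖u−v‖_∞ + 2α·max(‖u‖_∞,‖v‖_∞)·‖u−v‖_∞ and ‖h(u)‖_∞ ≤ 2α‖u‖_∞. Then F maps the set Δ_C = {ρ : sup_t e^{−αt}‖ρ_t‖_∞ ≤ C, ρ|_{t=0}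 = ρ_0} into itself and is a strict contraction on Δ_C with respect to the norm ‖ρ‖_T = sup_{t∈[0,T]} e^{−αt}‖ρ_t‖_∞; consequently F has a unique fixed point in Δ_C. -/
open MeasureTheory Set

namespace CFP

lemma exp_integral (c : ℝ) (hc : 0 < c) (t : ℝ) :
    ∫ s in (0:ℝ)..t, Real.exp (c * s) = (Real.exp (c * t) - 1) / c := by
  have hd : ∀ s : ℝ, HasDerivAt (fun x => Real.exp (c * x) / c) (Real.exp (c * s)) s := by
    intro s
    have h2 : HasDerivAt (fun x : ℝ => c * x) c s := by
      simpa using (hasDerivAt_id s).const_mul c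
    have h1 := (Real.hasDerivAt_exp (c * s)).comp s h2
    have h3 := h1.div_const c
    simpa [mul_div_assoc, mul_div_cancel_right₀ _ hc.ne'] using h3
  rw [intervalIntegral.integral_eq_sub_of_hasDerivAt (fun s _ => hd s)
    ((Real.continuous_exp.comp (continuous_const.mul continuous_id)).intervalIntegrable 0 t)]
  simp only [mul_zero, Real.exp_zero]
  ring

lemma cont_of_lip {E : Type*} [NormedAddCommGroup E] (α : ℝ) (h : E → E)
    (hlip : ∀ u v, ‖h u - h v‖ ≤ 2 * α * ‖u - v‖ + 2 * α * max ‖u‖ ‖v‖ * ‖u - v‖) :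
    Continuous h := by
  rw [continuous_iff_continuousAt]
  intro v
  rw [ContinuousAt, tendsto_iff_norm_sub_tendsto_zero]
  have hb : Filter.Tendsto (fun u : E => 2 * α * ‖u - v‖ + 2 * α * max ‖u‖ ‖v‖ * ‖u - v‖)
      (nhds v) (nhds 0) := by
    have hcont : Continuous fun u : E => 2 * α * ‖u - v‖ + 2 * α * max ‖u‖ ‖v‖ * ‖u - v‖ := by
      continuity
    have := hcont.tendsto v
    simpa using this
  exact squeeze_zero (fun u => norm_nonneg _) (fun u => hlip u v) hb

lemma norm_le_of_weighted {E : Type*} [NormedAddCommGroup E] {a B : ℝ} {x : E}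
    (hb : Real.exp (-a) * ‖x‖ ≤ B) : ‖x‖ ≤ B * Real.exp a := by
  have h2 : Real.exp (-a) * Real.exp a = 1 := by rw [← Real.exp_add]; simp
  nlinarith [norm_nonneg x, Real.exp_pos a, Real.exp_pos (-a)]

variable {E : Type*} [NormedAddCommGroup E] [NormedSpace ℝ E] [CompleteSpace E]

lemma selfmap (α C T : ℝ) (hα : 0 < α) (hC : 0 < C) (hT : 0 < T)
    (ρ₀ : E) (hρ₀ : ‖ρ₀‖ ≤ C) (h : E → E) (hcont : Continuous h)
    (hgrow : ∀ u, ‖h u‖ ≤ 2 * α * ‖u‖)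
    (ρ : ℝ → E) (hρc : ContinuousOn ρ (Icc 0 T))
    (hbd : ∀ t ∈ Icc (0:ℝ) T, Real.exp (-α * t) * ‖ρ t‖ ≤ C) :
    ContinuousOn (fun t => Real.exp (-α * t) • ρ₀ +
      ∫ s in (0:ℝ)..t, Real.exp (-α * (t - s)) • h (ρ s)) (Icc 0 T) ∧
    ∀ t ∈ Icc (0:ℝ) T, Real.exp (-α * t) *
      ‖Real.exp (-α * t) • ρ₀ + ∫ s in (0:ℝ)..t, Real.exp (-α * (t - s)) • h (ρ s)‖ ≤ C := by
  have hgc : ContinuousOn (fun s => Real.exp (α * s) • h (ρ s)) (Icc 0 T) :=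
    ((Real.continuous_exp.comp (continuous_const.mul continuous_id)).continuousOn).smul
      (hcont.comp_continuousOn hρc)
  have hrw : ∀ t : ℝ, (∫ s in (0:ℝ)..t, Real.exp (-α * (t - s)) • h (ρ s)) =
      Real.exp (-α * t) • ∫ s in (0:ℝ)..t, Real.exp (α * s) • h (ρ s) := by
    intro t
    rw [← intervalIntegral.integral_smul]
    refine intervalIntegral.integral_congr fun s _ => ?_
    rw [smul_smul, ← Real.exp_add]
    congr 1
    ring
  constructor
  · have hint : IntegrableOn (fun s => Real.exp (α * s) • h (ρ s)) (uIcc 0 T) volume := by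
      rw [uIcc_of_le hT.le]
      exact hgc.integrableOn_Icc
    have hP : ContinuousOn (fun t => ∫ s in (0:ℝ)..t, Real.exp (α * s) • h (ρ s)) (Icc 0 T) := by
      have := intervalIntegral.continuousOn_primitive_interval hint
      rwa [uIcc_of_le hT.le] at this
    have hcontAll : ContinuousOn (fun t => Real.exp (-α * t) • ρ₀ +
        Real.exp (-α * t) • (∫ s in (0:ℝ)..t, Real.exp (α * s) • h (ρ s))) (Icc 0 T) := by
      apply ContinuousOn.add
      · exact ((Real.continuous_exp.comp (continuous_const.mul continuous_id)).smul
          continuous_const).continuousOn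
      · exact ((Real.continuous_exp.comp (continuous_const.mul continuous_id)).continuousOn).smul hP
    exact hcontAll.congr fun t _ => by rw [hrw t]
  · intro t ht
    have hae : ∀ᵐ s ∂volume.restrict (Set.uIoc 0 t), ‖Real.exp (-α * (t - s)) • h (ρ s)‖ ≤
        2 * α * C * Real.exp (-α * t) * Real.exp (2 * α * s) := by
      rw [ae_restrict_iff' measurableSet_uIoc]
      refine ae_of_all _ fun s hs => ?_
      have hsI : s ∈ Icc (0:ℝ) T := by
        rw [uIoc_of_le ht.1] at hs
        exact ⟨hs.1.le, hs.2.trans ht.2⟩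
      have hbρ : ‖ρ s‖ ≤ C * Real.exp (α * s) := by
        have := hbd s hsI
        rw [neg_mul] at this
        exact norm_le_of_weighted this
      rw [norm_smul, Real.norm_eq_abs, abs_of_pos (Real.exp_pos _)]
      have eA : Real.exp (-α * (t - s)) * Real.exp (α * s) =
          Real.exp (-α * t) * Real.exp (2 * α * s) := by
        rw [← Real.exp_add, ← Real.exp_add]; congr 1; ring
      have hg := hgrow (ρ s)
      have h1 : Real.exp (-α * (t - s)) * ‖h (ρ s)‖ ≤
          Real.exp (-α * (t - s)) * (2 * α * (C * Real.exp (α * s))) := by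
        refine mul_le_mul_of_nonneg_left ?_ (Real.exp_pos _).le
        calc ‖h (ρ s)‖ ≤ 2 * α * ‖ρ s‖ := hg
          _ ≤ 2 * α * (C * Real.exp (α * s)) := by
              exact mul_le_mul_of_nonneg_left hbρ (by positivity)
      calc Real.exp (-α * (t - s)) * ‖h (ρ s)‖
          ≤ Real.exp (-α * (t - s)) * (2 * α * (C * Real.exp (α * s))) := h1
        _ = 2 * α * C * Real.exp (-α * t) * Real.exp (2 * α * s) := by
            linear_combination (2 * α * C) * eA
    have hIb : IntervalIntegrable
        (fun s => 2 * α * C * Real.exp (-α * t) * Real.exp (2 * α * s)) volume 0 t := by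
      apply Continuous.intervalIntegrable
      fun_prop
    have hbnd := intervalIntegral.norm_integral_le_abs_of_norm_le hae hIb
    have hval : (∫ s in (0:ℝ)..t, 2 * α * C * Real.exp (-α * t) * Real.exp (2 * α * s)) =
        C * Real.exp (-α * t) * (Real.exp (2 * α * t) - 1) := by
      rw [intervalIntegral.integral_const_mul, exp_integral (2 * α) (by positivity) t]
      field_simp
    rw [hval] at hbnd
    have hw2 : (1:ℝ) ≤ Real.exp (2 * α * t) := Real.one_le_exp (by nlinarith [ht.1])
    have habs : |C * Real.exp (-α * t) * (Real.exp (2 * α * t) - 1)| =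
        C * Real.exp (-α * t) * (Real.exp (2 * α * t) - 1) := by
      apply abs_of_nonneg
      have := Real.exp_pos (-α * t)
      exact mul_nonneg (mul_nonneg hC.le this.le) (by linarith)
    rw [habs] at hbnd
    have hA : ‖Real.exp (-α * t) • ρ₀‖ ≤ Real.exp (-α * t) * C := by
      rw [norm_smul, Real.norm_eq_abs, abs_of_pos (Real.exp_pos _)]
      exact mul_le_mul_of_nonneg_left hρ₀ (Real.exp_pos _).le
    have htri := norm_add_le (Real.exp (-α * t) • ρ₀)
      (∫ s in (0:ℝ)..t, Real.exp (-α * (t - s)) • h (ρ s))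
    have i1 : Real.exp (-α * t) * Real.exp (-α * t) * Real.exp (2 * α * t) = 1 := by
      rw [← Real.exp_add, ← Real.exp_add, show -α * t + -α * t + 2 * α * t = (0:ℝ) by ring,
        Real.exp_zero]
    nlinarith [Real.exp_pos (-α * t)]


lemma contr (α C T : ℝ) (hα : 0 < α) (hC : 0 < C) (hT : 0 < T)
    (ρ₀ : E) (h : E → E) (hcont : Continuous h)
    (hlip : ∀ u v, ‖h u - h v‖ ≤ 2 * α * ‖u - v‖ + 2 * α * max ‖u‖ ‖v‖ * ‖u - v‖)
    (ρ σ : ℝ → E) (hρc : ContinuousOn ρ (Icc 0 T)) (hσc : ContinuousOn σ (Icc 0 T))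
    (hρb : ∀ t ∈ Icc (0:ℝ) T, Real.exp (-α * t) * ‖ρ t‖ ≤ C)
    (hσb : ∀ t ∈ Icc (0:ℝ) T, Real.exp (-α * t) * ‖σ t‖ ≤ C)
    (M : ℝ) (hM0 : 0 ≤ M)
    (hMb : ∀ s ∈ Icc (0:ℝ) T, Real.exp (-α * s) * ‖ρ s - σ s‖ ≤ M)
    (t : ℝ) (ht : t ∈ Icc (0:ℝ) T) :
    Real.exp (-α * t) *
      ‖(Real.exp (-α * t) • ρ₀ + ∫ s in (0:ℝ)..t, Real.exp (-α * (t - s)) • h (ρ s)) -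
        (Real.exp (-α * t) • ρ₀ + ∫ s in (0:ℝ)..t, Real.exp (-α * (t - s)) • h (σ s))‖ ≤
    ((1 - Real.exp (-(2 * α * T))) + 2 * C / 3 * (Real.exp (α * T) - Real.exp (-(2 * α * T)))) * M := by
  have hsub : Icc (0:ℝ) t ⊆ Icc 0 T := Icc_subset_Icc le_rfl ht.2
  have hIρ : IntervalIntegrable (fun s => Real.exp (-α * (t - s)) • h (ρ s)) volume 0 t := by
    apply ContinuousOn.intervalIntegrable
    rw [uIcc_of_le ht.1]
    exact ((Real.continuous_exp.comp
      (continuous_const.mul (continuous_const.sub continuous_id))).continuousOn).smul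
      (hcont.comp_continuousOn (hρc.mono hsub))
  have hIσ : IntervalIntegrable (fun s => Real.exp (-α * (t - s)) • h (σ s)) volume 0 t := by
    apply ContinuousOn.intervalIntegrable
    rw [uIcc_of_le ht.1]
    exact ((Real.continuous_exp.comp
      (continuous_const.mul (continuous_const.sub continuous_id))).continuousOn).smul
      (hcont.comp_continuousOn (hσc.mono hsub))
  have hdiff : (Real.exp (-α * t) • ρ₀ + ∫ s in (0:ℝ)..t, Real.exp (-α * (t - s)) • h (ρ s)) -
      (Real.exp (-α * t) • ρ₀ + ∫ s in (0:ℝ)..t, Real.exp (-α * (t - s)) • h (σ s)) =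
      ∫ s in (0:ℝ)..t, Real.exp (-α * (t - s)) • (h (ρ s) - h (σ s)) := by
    rw [add_sub_add_left_eq_sub, ← intervalIntegral.integral_sub hIρ hIσ]
    exact intervalIntegral.integral_congr fun s _ => (smul_sub _ _ _).symm
  have hae : ∀ᵐ s ∂volume.restrict (Set.uIoc 0 t), ‖Real.exp (-α * (t - s)) • (h (ρ s) - h (σ s))‖ ≤
      Real.exp (-α * t) * (2 * α * M * Real.exp (2 * α * s) + 2 * α * C * M * Real.exp (3 * α * s)) := by
    rw [ae_restrict_iff' measurableSet_uIoc]
    refine ae_of_all _ fun s hs => ?_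
    have hsI : s ∈ Icc (0:ℝ) T := by
      rw [uIoc_of_le ht.1] at hs
      exact ⟨hs.1.le, hs.2.trans ht.2⟩
    have hbρ : ‖ρ s‖ ≤ C * Real.exp (α * s) := by
      have := hρb s hsI; rw [neg_mul] at this; exact norm_le_of_weighted this
    have hbσ : ‖σ s‖ ≤ C * Real.exp (α * s) := by
      have := hσb s hsI; rw [neg_mul] at this; exact norm_le_of_weighted this
    have hbd : ‖ρ s - σ s‖ ≤ M * Real.exp (α * s) := by
      have := hMb s hsI; rw [neg_mul] at this; exact norm_le_of_weighted this
    have hmax : max ‖ρ s‖ ‖σ s‖ ≤ C * Real.exp (α * s) := max_le hbρ hbσ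
    rw [norm_smul, Real.norm_eq_abs, abs_of_pos (Real.exp_pos _)]
    have eA : Real.exp (-α * (t - s)) = Real.exp (-α * t) * Real.exp (α * s) := by
      rw [← Real.exp_add]; congr 1; ring
    have eB : Real.exp (α * s) * Real.exp (α * s) = Real.exp (2 * α * s) := by
      rw [← Real.exp_add]; congr 1; ring
    have eC : Real.exp (2 * α * s) * Real.exp (α * s) = Real.exp (3 * α * s) := by
      rw [← Real.exp_add]; congr 1; ring
    calc Real.exp (-α * (t - s)) * ‖h (ρ s) - h (σ s)‖
        ≤ Real.exp (-α * (t - s)) *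
          (2 * α * (M * Real.exp (α * s)) + 2 * α * (C * Real.exp (α * s)) * (M * Real.exp (α * s))) := by
          refine mul_le_mul_of_nonneg_left ?_ (Real.exp_pos _).le
          calc ‖h (ρ s) - h (σ s)‖
              ≤ 2 * α * ‖ρ s - σ s‖ + 2 * α * max ‖ρ s‖ ‖σ s‖ * ‖ρ s - σ s‖ := hlip _ _
            _ ≤ 2 * α * (M * Real.exp (α * s)) +
                2 * α * (C * Real.exp (α * s)) * (M * Real.exp (α * s)) := by
                have h1 : 2 * α * ‖ρ s - σ s‖ ≤ 2 * α * (M * Real.exp (α * s)) :=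
                  mul_le_mul_of_nonneg_left hbd (by positivity)
                have h2 : 2 * α * max ‖ρ s‖ ‖σ s‖ * ‖ρ s - σ s‖ ≤
                    2 * α * (C * Real.exp (α * s)) * (M * Real.exp (α * s)) := by
                  apply mul_le_mul (mul_le_mul_of_nonneg_left hmax (by positivity)) hbd
                    (norm_nonneg _) (by positivity)
                linarith
      _ = Real.exp (-α * t) *
          (2 * α * M * Real.exp (2 * α * s) + 2 * α * C * M * Real.exp (3 * α * s)) := by
          rw [eA]
          linear_combination (2 * α * M * Real.exp (-α * t)) * eB +
            (2 * α * C * M * Real.exp (-α * t) * Real.exp (α * s)) * eB +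
            (2 * α * C * M * Real.exp (-α * t)) * eC
  have hIb : IntervalIntegrable (fun s => Real.exp (-α * t) *
      (2 * α * M * Real.exp (2 * α * s) + 2 * α * C * M * Real.exp (3 * α * s))) volume 0 t := by
    apply Continuous.intervalIntegrable
    fun_prop
  have hbnd := intervalIntegral.norm_integral_le_abs_of_norm_le hae hIb
  have hval : (∫ s in (0:ℝ)..t, Real.exp (-α * t) *
      (2 * α * M * Real.exp (2 * α * s) + 2 * α * C * M * Real.exp (3 * α * s))) =
      Real.exp (-α * t) *
        (M * (Real.exp (2 * α * t) - 1) + 2 * C / 3 * M * (Real.exp (3 * α * t) - 1)) := by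
    rw [intervalIntegral.integral_const_mul]
    rw [intervalIntegral.integral_add
      ((by fun_prop : Continuous fun s => 2 * α * M * Real.exp (2 * α * s)).intervalIntegrable 0 t)
      ((by fun_prop : Continuous fun s => 2 * α * C * M * Real.exp (3 * α * s)).intervalIntegrable 0 t)]
    rw [intervalIntegral.integral_const_mul, intervalIntegral.integral_const_mul,
      exp_integral (2 * α) (by positivity) t, exp_integral (3 * α) (by positivity) t]
    field_simp
  rw [hval] at hbnd
  have hw2 : (1:ℝ) ≤ Real.exp (2 * α * t) := Real.one_le_exp (by nlinarith [ht.1])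
  have hw3 : (1:ℝ) ≤ Real.exp (3 * α * t) := Real.one_le_exp (by nlinarith [ht.1])
  have habs : |Real.exp (-α * t) *
      (M * (Real.exp (2 * α * t) - 1) + 2 * C / 3 * M * (Real.exp (3 * α * t) - 1))| =
      Real.exp (-α * t) *
      (M * (Real.exp (2 * α * t) - 1) + 2 * C / 3 * M * (Real.exp (3 * α * t) - 1)) := by
    apply abs_of_nonneg
    have h1 : (0:ℝ) ≤ M * (Real.exp (2 * α * t) - 1) := mul_nonneg hM0 (by linarith)
    have h2 : (0:ℝ) ≤ 2 * C / 3 * M * (Real.exp (3 * α * t) - 1) :=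
      mul_nonneg (mul_nonneg (by positivity) hM0) (by linarith)
    positivity
  rw [habs] at hbnd
  rw [hdiff]
  have i1 : Real.exp (-α * t) * Real.exp (-α * t) * Real.exp (2 * α * t) = 1 := by
    rw [← Real.exp_add, ← Real.exp_add, show -α * t + -α * t + 2 * α * t = (0:ℝ) by ring,
      Real.exp_zero]
  have i2 : Real.exp (-α * t) * Real.exp (-α * t) * Real.exp (3 * α * t) = Real.exp (α * t) := by
    rw [← Real.exp_add, ← Real.exp_add]; congr 1; ring
  have i4 : Real.exp (-(2 * α * T)) ≤ Real.exp (-α * t) * Real.exp (-α * t) := by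
    rw [← Real.exp_add]
    exact Real.exp_le_exp.2 (by nlinarith [ht.2, ht.1])
  have i5 : Real.exp (α * t) ≤ Real.exp (α * T) :=
    Real.exp_le_exp.2 (by nlinarith [ht.2])
  have hmain : Real.exp (-α * t) * (Real.exp (-α * t) *
      (M * (Real.exp (2 * α * t) - 1) + 2 * C / 3 * M * (Real.exp (3 * α * t) - 1))) ≤
      ((1 - Real.exp (-(2 * α * T))) + 2 * C / 3 * (Real.exp (α * T) - Real.exp (-(2 * α * T)))) * M := by
    have e1 : M * (Real.exp (-α * t) * Real.exp (-α * t) * Real.exp (2 * α * t)) = M := by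
      rw [i1, mul_one]
    have e2c : C * (M * (Real.exp (-α * t) * Real.exp (-α * t) * Real.exp (3 * α * t))) =
        C * (M * Real.exp (α * t)) := by rw [i2]
    nlinarith [e1, e2c, mul_nonneg hM0 (sub_nonneg.2 i4), mul_nonneg hM0 (sub_nonneg.2 i5),
      mul_nonneg (mul_nonneg hC.le hM0) (sub_nonneg.2 i4),
      mul_nonneg (mul_nonneg hC.le hM0) (sub_nonneg.2 i5)]
  calc Real.exp (-α * t) * ‖∫ s in (0:ℝ)..t, Real.exp (-α * (t - s)) • (h (ρ s) - h (σ s))‖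
      ≤ Real.exp (-α * t) * (Real.exp (-α * t) *
        (M * (Real.exp (2 * α * t) - 1) + 2 * C / 3 * M * (Real.exp (3 * α * t) - 1))) :=
        mul_le_mul_of_nonneg_left hbnd (Real.exp_pos _).le
    _ ≤ _ := hmain

end CFP
open MeasureTheory Set

set_option maxHeartbeats 2000000
set_option synthInstance.maxHeartbeats 400000

theorem contraction_fixed_point {d : ℕ} (α C T : ℝ) (hα : 0 < α) (hC : 0 < C)
    (hT : 0 < T) (hTsmall : Real.exp (3 * α * T) < 1 + 3 / (2 * C))
    (ρ₀ : Lp ℝ ⊤ (volume : Measure (EuclideanSpace ℝ (Fin d)))) (hρ₀ : ‖ρ₀‖ ≤ C)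
    (h : Lp ℝ ⊤ (volume : Measure (EuclideanSpace ℝ (Fin d))) → Lp ℝ ⊤ (volume : Measure (EuclideanSpace ℝ (Fin d))))
    (hlip : ∀ u v, ‖h u - h v‖ ≤ 2 * α * ‖u - v‖ + 2 * α * max ‖u‖ ‖v‖ * ‖u - v‖)
    (hgrow : ∀ u, ‖h u‖ ≤ 2 * α * ‖u‖)
    (F : (ℝ → Lp ℝ ⊤ (volume : Measure (EuclideanSpace ℝ (Fin d)))) → (ℝ → Lp ℝ ⊤ (volume : Measure (EuclideanSpace ℝ (Fin d)))))
    (hF : ∀ ρ t, F ρ t = Real.exp (-α * t) • ρ₀ +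
      ∫ s in (0 : ℝ)..t, Real.exp (-α * (t - s)) • h (ρ s)) :
    -- Δ_C maps into itself, F is a strict contraction on Δ_C, and has a unique fixed point
    (∀ ρ,
        (ContinuousOn ρ (Icc 0 T) ∧ ρ 0 = ρ₀ ∧
          ∀ t ∈ Icc (0 : ℝ) T, Real.exp (-α * t) * ‖ρ t‖ ≤ C) →
        (ContinuousOn (F ρ) (Icc 0 T) ∧ F ρ 0 = ρ₀ ∧
          ∀ t ∈ Icc (0 : ℝ) T, Real.exp (-α * t) * ‖F ρ t‖ ≤ C)) ∧
    (∃ κ : ℝ, 0 ≤ κ ∧ κ < 1 ∧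
      ∀ ρ σ,
        (ContinuousOn ρ (Icc 0 T) ∧ ρ 0 = ρ₀ ∧
          ∀ t ∈ Icc (0 : ℝ) T, Real.exp (-α * t) * ‖ρ t‖ ≤ C) →
        (ContinuousOn σ (Icc 0 T) ∧ σ 0 = ρ₀ ∧
          ∀ t ∈ Icc (0 : ℝ) T, Real.exp (-α * t) * ‖σ t‖ ≤ C) →
        ∀ t ∈ Icc (0 : ℝ) T,
          Real.exp (-α * t) * ‖F ρ t - F σ t‖ ≤
            κ * sSup ((fun s => Real.exp (-α * s) * ‖ρ s - σ s‖) '' Icc (0 : ℝ) T)) ∧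
    (∃ ρ,
        (ContinuousOn ρ (Icc 0 T) ∧ ρ 0 = ρ₀ ∧
          ∀ t ∈ Icc (0 : ℝ) T, Real.exp (-α * t) * ‖ρ t‖ ≤ C) ∧
        (∀ t ∈ Icc (0 : ℝ) T, F ρ t = ρ t) ∧
        ∀ σ,
          (ContinuousOn σ (Icc 0 T) ∧ σ 0 = ρ₀ ∧
            ∀ t ∈ Icc (0 : ℝ) T, Real.exp (-α * t) * ‖σ t‖ ≤ C) →
          (∀ t ∈ Icc (0 : ℝ) T, F σ t = σ t) →
          ∀ t ∈ Icc (0 : ℝ) T, σ t = ρ t) := by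
  have hcont : Continuous h := CFP.cont_of_lip α h hlip
  have hκ0 : (0:ℝ) ≤ (1 - Real.exp (-(2 * α * T))) +
      2 * C / 3 * (Real.exp (α * T) - Real.exp (-(2 * α * T))) := by
    have hU1 : Real.exp (-(2 * α * T)) ≤ 1 := by
      calc Real.exp (-(2 * α * T)) ≤ Real.exp 0 := Real.exp_le_exp.2 (by nlinarith)
        _ = 1 := Real.exp_zero
    have hUX : Real.exp (-(2 * α * T)) ≤ Real.exp (α * T) := Real.exp_le_exp.2 (by nlinarith)
    have : (0:ℝ) ≤ 2 * C / 3 * (Real.exp (α * T) - Real.exp (-(2 * α * T))) :=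
      mul_nonneg (by positivity) (by linarith)
    linarith
  have hκ1 : (1 - Real.exp (-(2 * α * T))) +
      2 * C / 3 * (Real.exp (α * T) - Real.exp (-(2 * α * T))) < 1 := by
    have hkey : 2 * C * (Real.exp (3 * α * T) - 1) < 3 := by
      have h' : Real.exp (3 * α * T) - 1 < 3 / (2 * C) := by linarith
      calc 2 * C * (Real.exp (3 * α * T) - 1) < 2 * C * (3 / (2 * C)) :=
            mul_lt_mul_of_pos_left h' (by positivity)
        _ = 3 := by field_simp
    have j1 : Real.exp (-(2 * α * T)) * Real.exp (3 * α * T) = Real.exp (α * T) := by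
      rw [← Real.exp_add]; congr 1; ring
    have j1c : C * (Real.exp (-(2 * α * T)) * Real.exp (3 * α * T)) = C * Real.exp (α * T) := by
      rw [j1]
    nlinarith [Real.exp_pos (-(2 * α * T)), j1c,
      mul_pos (Real.exp_pos (-(2 * α * T)))
        (show (0:ℝ) < 3 - 2 * C * (Real.exp (3 * α * T) - 1) by linarith)]
  -- Part 1
  have part1 : ∀ ρ : ℝ → Lp ℝ ⊤ (volume : Measure (EuclideanSpace ℝ (Fin d))),
      (ContinuousOn ρ (Icc 0 T) ∧ ρ 0 = ρ₀ ∧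
        ∀ t ∈ Icc (0 : ℝ) T, Real.exp (-α * t) * ‖ρ t‖ ≤ C) →
      (ContinuousOn (F ρ) (Icc 0 T) ∧ F ρ 0 = ρ₀ ∧
        ∀ t ∈ Icc (0 : ℝ) T, Real.exp (-α * t) * ‖F ρ t‖ ≤ C) := by
    rintro ρ ⟨hc, h0, hb⟩
    obtain ⟨hsm1, hsm2⟩ := CFP.selfmap α C T hα hC hT ρ₀ hρ₀ h hcont hgrow ρ hc hb
    refine ⟨hsm1.congr fun t _ => hF ρ t, ?_, fun t ht => ?_⟩
    · rw [hF]
      simp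
    · rw [hF]
      exact hsm2 t ht
  -- Part 2
  have part2core : ∀ ρ σ : ℝ → Lp ℝ ⊤ (volume : Measure (EuclideanSpace ℝ (Fin d))),
      (ContinuousOn ρ (Icc 0 T) ∧ ρ 0 = ρ₀ ∧
        ∀ t ∈ Icc (0 : ℝ) T, Real.exp (-α * t) * ‖ρ t‖ ≤ C) →
      (ContinuousOn σ (Icc 0 T) ∧ σ 0 = ρ₀ ∧
        ∀ t ∈ Icc (0 : ℝ) T, Real.exp (-α * t) * ‖σ t‖ ≤ C) →
      ∀ t ∈ Icc (0 : ℝ) T,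
        Real.exp (-α * t) * ‖F ρ t - F σ t‖ ≤
          ((1 - Real.exp (-(2 * α * T))) +
            2 * C / 3 * (Real.exp (α * T) - Real.exp (-(2 * α * T)))) *
          sSup ((fun s => Real.exp (-α * s) * ‖ρ s - σ s‖) '' Icc (0 : ℝ) T) := by
    rintro ρ σ ⟨hρc, hρ0, hρb⟩ ⟨hσc, hσ0, hσb⟩ t ht
    have hfc : ContinuousOn (fun s => Real.exp (-α * s) * ‖ρ s - σ s‖) (Icc 0 T) :=
      ((Real.continuous_exp.comp (continuous_const.mul continuous_id)).continuousOn).mul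
        ((hρc.sub hσc).norm)
    have hbdd : BddAbove ((fun s => Real.exp (-α * s) * ‖ρ s - σ s‖) '' Icc 0 T) :=
      isCompact_Icc.bddAbove_image hfc
    have hMb : ∀ s ∈ Icc (0:ℝ) T, Real.exp (-α * s) * ‖ρ s - σ s‖ ≤
        sSup ((fun s => Real.exp (-α * s) * ‖ρ s - σ s‖) '' Icc 0 T) := fun s hs =>
      le_csSup hbdd ⟨s, hs, rfl⟩
    have hM0 : 0 ≤ sSup ((fun s => Real.exp (-α * s) * ‖ρ s - σ s‖) '' Icc 0 T) :=
      le_trans (by positivity) (hMb 0 ⟨le_rfl, hT.le⟩)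
    have hres := CFP.contr α C T hα hC hT ρ₀ h hcont hlip ρ σ hρc hσc hρb hσb _ hM0 hMb t ht
    rw [hF ρ t, hF σ t]
    exact hres
  refine ⟨part1, ⟨_, hκ0, hκ1, part2core⟩, ?_⟩
  -- Part 3 : fixed point
  have h0mem : (0:ℝ) ∈ Icc (0:ℝ) T := ⟨le_rfl, hT.le⟩
  set zero : Icc (0:ℝ) T := ⟨0, h0mem⟩ with hzero
  set K : Set C(Icc (0:ℝ) T, Lp ℝ ⊤ (volume : Measure (EuclideanSpace ℝ (Fin d)))) :=
    {η | η zero = ρ₀ ∧ ∀ t, ‖η t‖ ≤ C} with hK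
  have hKclosed : IsClosed K := by
    have h1 : IsClosed {η : C(Icc (0:ℝ) T, Lp ℝ ⊤ (volume : Measure (EuclideanSpace ℝ (Fin d)))) |
        η zero = ρ₀} :=
      isClosed_eq (continuous_eval_const zero) continuous_const
    have h2 : IsClosed {η : C(Icc (0:ℝ) T, Lp ℝ ⊤ (volume : Measure (EuclideanSpace ℝ (Fin d)))) |
        ∀ t, ‖η t‖ ≤ C} := by
      rw [setOf_forall]
      exact isClosed_iInter fun t =>
        isClosed_le ((continuous_eval_const t).norm) continuous_const
    exact h1.inter h2
  haveI : CompleteSpace K := hKclosed.completeSpace_coe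
  haveI : Nonempty K := ⟨⟨ContinuousMap.const _ ρ₀, rfl, fun _ => hρ₀⟩⟩
  set ext : C(Icc (0:ℝ) T, Lp ℝ ⊤ (volume : Measure (EuclideanSpace ℝ (Fin d)))) →
      ℝ → Lp ℝ ⊤ (volume : Measure (EuclideanSpace ℝ (Fin d))) :=
    fun η s => Real.exp (α * s) • η (projIcc 0 T hT.le s) with hext
  have hext_cont : ∀ η, Continuous (ext η) := fun η =>
    (Real.continuous_exp.comp (continuous_const.mul continuous_id)).smul
      (η.continuous.comp continuous_projIcc)
  have hext0 : ∀ η, η ∈ K → ext η 0 = ρ₀ := by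
    intro η hη
    show Real.exp (α * 0) • η (projIcc 0 T hT.le 0) = ρ₀
    have hp : projIcc 0 T hT.le 0 = zero := by rw [projIcc_left]
    rw [hp, hη.1, mul_zero, Real.exp_zero, one_smul]
  have hextb : ∀ η, η ∈ K → ∀ t ∈ Icc (0:ℝ) T, Real.exp (-α * t) * ‖ext η t‖ ≤ C := by
    intro η hη t _
    show Real.exp (-α * t) * ‖Real.exp (α * t) • η (projIcc 0 T hT.le t)‖ ≤ C
    rw [norm_smul, Real.norm_eq_abs, abs_of_pos (Real.exp_pos _), ← mul_assoc,
      show Real.exp (-α * t) * Real.exp (α * t) = 1 by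
        rw [← Real.exp_add, show -α * t + α * t = (0:ℝ) by ring, Real.exp_zero],
      one_mul]
    exact hη.2 _
  have hKmem : ∀ η, η ∈ K →
      (ContinuousOn (F (ext η)) (Icc 0 T) ∧ F (ext η) 0 = ρ₀ ∧
        ∀ t ∈ Icc (0 : ℝ) T, Real.exp (-α * t) * ‖F (ext η) t‖ ≤ C) :=
    fun η hη => part1 (ext η) ⟨(hext_cont η).continuousOn, hext0 η hη, hextb η hη⟩
  let Φ : K → K := fun η =>
    ⟨⟨fun t => Real.exp (-α * (t:ℝ)) • F (ext η.1) (t:ℝ),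
      (((Real.continuous_exp.comp (continuous_const.mul continuous_id)).continuousOn).smul
        (hKmem η.1 η.2).1).restrict⟩,
      by
        constructor
        · show Real.exp (-α * ((zero : Icc (0:ℝ) T) : ℝ)) • F (ext η.1) ((zero : Icc (0:ℝ) T) : ℝ) = ρ₀
          rw [show ((zero : Icc (0:ℝ) T) : ℝ) = (0:ℝ) from rfl, (hKmem η.1 η.2).2.1,
            mul_zero, Real.exp_zero, one_smul]
        · intro t
          show ‖Real.exp (-α * (t:ℝ)) • F (ext η.1) (t:ℝ)‖ ≤ C
          rw [norm_smul, Real.norm_eq_abs, abs_of_pos (Real.exp_pos _)]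
          exact (hKmem η.1 η.2).2.2 t.1 t.2⟩
  have hΦcontr : ∀ η η' : K, dist (Φ η) (Φ η') ≤
      ((1 - Real.exp (-(2 * α * T))) +
        2 * C / 3 * (Real.exp (α * T) - Real.exp (-(2 * α * T)))) * dist η η' := by
    intro η η'
    rw [Subtype.dist_eq, ContinuousMap.dist_le (mul_nonneg hκ0 dist_nonneg)]
    intro t
    have hMb : ∀ s ∈ Icc (0:ℝ) T,
        Real.exp (-α * s) * ‖ext η.1 s - ext η'.1 s‖ ≤ dist η η' := by
      intro s hs
      have heq : ext η.1 s - ext η'.1 s =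
          Real.exp (α * s) • (η.1 ⟨s, hs⟩ - η'.1 ⟨s, hs⟩) := by
        show Real.exp (α * s) • η.1 (projIcc 0 T hT.le s) -
          Real.exp (α * s) • η'.1 (projIcc 0 T hT.le s) = _
        rw [projIcc_of_mem hT.le hs, smul_sub]
      rw [heq, norm_smul, Real.norm_eq_abs, abs_of_pos (Real.exp_pos _), ← mul_assoc,
        show Real.exp (-α * s) * Real.exp (α * s) = 1 by
          rw [← Real.exp_add, show -α * s + α * s = (0:ℝ) by ring, Real.exp_zero],
        one_mul, ← dist_eq_norm, Subtype.dist_eq η η']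
      exact ContinuousMap.dist_apply_le_dist _
    have hcc := CFP.contr α C T hα hC hT ρ₀ h hcont hlip (ext η.1) (ext η'.1)
      (hext_cont η.1).continuousOn (hext_cont η'.1).continuousOn
      (hextb η.1 η.2) (hextb η'.1 η'.2) (dist η η') dist_nonneg hMb t.1 t.2
    show dist (Real.exp (-α * (t:ℝ)) • F (ext η.1) (t:ℝ))
      (Real.exp (-α * (t:ℝ)) • F (ext η'.1) (t:ℝ)) ≤ _
    rw [dist_eq_norm, ← smul_sub, norm_smul, Real.norm_eq_abs, abs_of_pos (Real.exp_pos _),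
      hF (ext η.1) (t:ℝ), hF (ext η'.1) (t:ℝ)]
    exact hcc
  have hCW : ContractingWith
      ⟨(1 - Real.exp (-(2 * α * T))) +
        2 * C / 3 * (Real.exp (α * T) - Real.exp (-(2 * α * T))), hκ0⟩ Φ :=
    ⟨by exact_mod_cast hκ1, LipschitzWith.of_dist_le_mul fun x y => hΦcontr x y⟩
  set ηs : K := ContractingWith.fixedPoint Φ hCW with hηs
  have hfix : Φ ηs = ηs := hCW.fixedPoint_isFixedPt
  have hfixρ : ∀ t ∈ Icc (0:ℝ) T, F (ext ηs.1) t = ext ηs.1 t := by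
    intro t ht
    have happ : (Φ ηs).1 ⟨t, ht⟩ = ηs.1 ⟨t, ht⟩ := by rw [hfix]
    have happ' : Real.exp (-α * t) • F (ext ηs.1) t = ηs.1 ⟨t, ht⟩ := happ
    calc F (ext ηs.1) t
        = Real.exp (α * t) • (Real.exp (-α * t) • F (ext ηs.1) t) := by
          rw [smul_smul, show Real.exp (α * t) * Real.exp (-α * t) = 1 by
            rw [← Real.exp_add, show α * t + -α * t = (0:ℝ) by ring, Real.exp_zero], one_smul]
      _ = Real.exp (α * t) • ηs.1 ⟨t, ht⟩ := by rw [happ']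
      _ = ext ηs.1 t := by
          show _ = Real.exp (α * t) • ηs.1 (projIcc 0 T hT.le t)
          rw [projIcc_of_mem hT.le ht]
  refine ⟨ext ηs.1, ⟨(hext_cont ηs.1).continuousOn, hext0 ηs.1 ηs.2, hextb ηs.1 ηs.2⟩,
    hfixρ, ?_⟩
  rintro σ ⟨hσc, hσ0, hσb⟩ hσfix t ht
  have hfc : ContinuousOn (fun s => Real.exp (-α * s) * ‖ext ηs.1 s - σ s‖) (Icc 0 T) :=
    ((Real.continuous_exp.comp (continuous_const.mul continuous_id)).continuousOn).mul
      (((hext_cont ηs.1).continuousOn.sub hσc).norm)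
  have hbdd : BddAbove ((fun s => Real.exp (-α * s) * ‖ext ηs.1 s - σ s‖) '' Icc 0 T) :=
    isCompact_Icc.bddAbove_image hfc
  have hMb : ∀ s ∈ Icc (0:ℝ) T, Real.exp (-α * s) * ‖ext ηs.1 s - σ s‖ ≤
      sSup ((fun s => Real.exp (-α * s) * ‖ext ηs.1 s - σ s‖) '' Icc 0 T) := fun s hs =>
    le_csSup hbdd ⟨s, hs, rfl⟩
  have hM0 : 0 ≤ sSup ((fun s => Real.exp (-α * s) * ‖ext ηs.1 s - σ s‖) '' Icc 0 T) :=
    le_trans (by positivity) (hMb 0 h0mem)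
  have hpt : ∀ s ∈ Icc (0:ℝ) T, Real.exp (-α * s) * ‖ext ηs.1 s - σ s‖ ≤
      ((1 - Real.exp (-(2 * α * T))) +
        2 * C / 3 * (Real.exp (α * T) - Real.exp (-(2 * α * T)))) *
      sSup ((fun s => Real.exp (-α * s) * ‖ext ηs.1 s - σ s‖) '' Icc 0 T) := by
    intro s hs
    have := part2core (ext ηs.1) σ
      ⟨(hext_cont ηs.1).continuousOn, hext0 ηs.1 ηs.2, hextb ηs.1 ηs.2⟩
      ⟨hσc, hσ0, hσb⟩ s hs
    rwa [hfixρ s hs, hσfix s hs] at this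
  have hMle : sSup ((fun s => Real.exp (-α * s) * ‖ext ηs.1 s - σ s‖) '' Icc 0 T) ≤
      ((1 - Real.exp (-(2 * α * T))) +
        2 * C / 3 * (Real.exp (α * T) - Real.exp (-(2 * α * T)))) *
      sSup ((fun s => Real.exp (-α * s) * ‖ext ηs.1 s - σ s‖) '' Icc 0 T) := by
    refine csSup_le ((nonempty_Icc.2 hT.le).image _) ?_
    rintro x ⟨s, hs, rfl⟩
    exact hpt s hs
  have hMneg : sSup ((fun s => Real.exp (-α * s) * ‖ext ηs.1 s - σ s‖) '' Icc 0 T) ≤ 0 := by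
    by_contra hpos
    push_neg at hpos
    have := mul_lt_mul_of_pos_right hκ1 hpos
    rw [one_mul] at this
    linarith
  have hft : Real.exp (-α * t) * ‖ext ηs.1 t - σ t‖ ≤ 0 := le_trans (hMb t ht) hMneg
  have hnorm0 : ‖ext ηs.1 t - σ t‖ ≤ 0 := by
    have he := Real.exp_pos (-α * t)
    nlinarith [norm_nonneg (ext ηs.1 t - σ t)]
  exact (sub_eq_zero.1 (norm_le_zero_iff.1 hnorm0)).symm
end
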